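/- Quantitative soundness of violation classes (strengthening of Lemma 1 used in its inductive proof): for every STL formula φ with a classification criterion fixed as in the context, every violation class ψ ∈ Cls⁻(φ), every valuation θ ∈ Θ, and every signal w, the robustness satisfies ρ(w, φ) ≤ ρ(w, ψ(θ)). -/

import Mathlib

namespace STLClass

abbrev Signal (N : ℕ) := ℝ → Fin N → ℝ

def shift {N : ℕ} (w : Signal N) (t : ℝ) : Signal N := fun t' => w (t + t')

inductive STL (N : ℕ) : Type where
  | atom (f : (Fin N → ℝ) → ℝ)
  | falsum
  | not (φ : STL N)
  | and (φ₁ φ₂ : STL N)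
  | or (φ₁ φ₂ : STL N)
  | always (a b : ℝ) (φ : STL N)
  | event (a b : ℝ) (φ : STL N)
  | untl (a b : ℝ) (φ₁ φ₂ : STL N)

def STL.top {N : ℕ} : STL N := .not .falsum

noncomputable def robust {N : ℕ} : STL N → Signal N → EReal
  | .atom f, w => ((f (w 0) : ℝ) : EReal)
  | .falsum, _ => ⊥
  | .not φ, w => - robust φ w
  | .and φ₁ φ₂, w => min (robust φ₁ w) (robust φ₂ w)
  | .or φ₁ φ₂, w => max (robust φ₁ w) (robust φ₂ w)
  | .always a b φ, w => ⨅ t : Set.Icc a b, robust φ (shift w t.1)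
  | .event a b φ, w => ⨆ t : Set.Icc a b, robust φ (shift w t.1)
  | .untl a b φ₁ φ₂, w =>
      ⨆ t : Set.Icc a b,
        min (robust φ₂ (shift w t.1)) (⨅ t' : Set.Ico (0 : ℝ) t.1, robust φ₁ (shift w t'.1))

def Sat {N : ℕ} (w : Signal N) (φ : STL N) : Prop := 0 < robust φ w

def Vio {N : ℕ} (w : Signal N) (φ : STL N) : Prop := robust φ w < 0

/-- An STL formula together with a classification criterion: each temporal operator is
annotated with a natural number `k`, meaning that its interval is split into `k + 1`
consecutive segments (so the "positive integer" of the criterion is `k + 1`). -/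
inductive AForm (N : ℕ) : Type where
  | atom (f : (Fin N → ℝ) → ℝ)
  | falsum
  | not (φ : AForm N)
  | and (φ₁ φ₂ : AForm N)
  | or (φ₁ φ₂ : AForm N)
  | always (a b : ℝ) (k : ℕ) (φ : AForm N)
  | event (a b : ℝ) (k : ℕ) (φ : AForm N)
  | untl (a b : ℝ) (k : ℕ) (φ₁ φ₂ : AForm N)

/-- The underlying STL formula of an annotated formula. -/
def AForm.toSTL {N : ℕ} : AForm N → STL N
  | .atom f => .atom f
  | .falsum => .falsum
  | .not φ => .not φ.toSTL
  | .and φ₁ φ₂ => .and φ₁.toSTL φ₂.toSTL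
  | .or φ₁ φ₂ => .or φ₁.toSTL φ₂.toSTL
  | .always a b _ φ => .always a b φ.toSTL
  | .event a b _ φ => .event a b φ.toSTL
  | .untl a b _ φ₁ φ₂ => .untl a b φ₁.toSTL φ₂.toSTL

/-- Well-formedness: every temporal interval `[a, b]` satisfies `0 ≤ a < b`. -/
def AForm.WF {N : ℕ} : AForm N → Prop
  | .atom _ => True
  | .falsum => True
  | .not φ => φ.WF
  | .and φ₁ φ₂ => φ₁.WF ∧ φ₂.WF
  | .or φ₁ φ₂ => φ₁.WF ∧ φ₂.WF
  | .always a b _ φ => 0 ≤ a ∧ a < b ∧ φ.WF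
  | .event a b _ φ => 0 ≤ a ∧ a < b ∧ φ.WF
  | .untl a b _ φ₁ φ₂ => 0 ≤ a ∧ a < b ∧ φ₁.WF ∧ φ₂.WF

/-- A split of the interval `[a, b]` into `n` consecutive nonsingular segments:
`n + 1` strictly increasing points starting at `a` and ending at `b`.  The segment
`i` is `[pts i.castSucc, pts i.succ]`. -/
structure Split (a b : ℝ) (n : ℕ) : Type where
  pts : Fin (n + 1) → ℝ
  strictMono : StrictMono pts
  first : pts 0 = a
  last : pts (Fin.last n) = b

/-- The valuation space `Θ` of an annotated formula: a choice of admissible breakpoints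
for each temporal subformula. -/
def Val {N : ℕ} : AForm N → Type
  | .atom _ => PUnit
  | .falsum => PUnit
  | .not φ => Val φ
  | .and φ₁ φ₂ => Val φ₁ × Val φ₂
  | .or φ₁ φ₂ => Val φ₁ × Val φ₂
  | .always a b k φ => Split a b (k + 1) × Val φ
  | .event a b k φ => Split a b (k + 1) × Val φ
  | .untl a b k φ₁ φ₂ => Split a b (k + 1) × Val φ₁ × Val φ₂

/-- Finite conjunction of a list of STL formulas (empty conjunction is `⊤`). -/
def listAnd {N : ℕ} : List (STL N) → STL N
  | [] => STL.top
  | [φ] => φ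
  | φ :: φ' :: rest => .and φ (listAnd (φ' :: rest))

/-- Finite disjunction of a list of STL formulas (empty disjunction is `⊥`). -/
def listOr {N : ℕ} : List (STL N) → STL N
  | [] => .falsum
  | [φ] => φ
  | φ :: φ' :: rest => .or φ (listOr (φ' :: rest))

/-- `⋀_{i} f i`. -/
def iAnd {N : ℕ} {k : ℕ} (f : Fin k → STL N) : STL N := listAnd (List.ofFn f)

/-- `⋁_{i} f i`. -/
def iOr {N : ℕ} {k : ℕ} (f : Fin k → STL N) : STL N := listOr (List.ofFn f)

/-- `Cls true φ` is the set `Cls⁺(φ)` of satisfaction classes and `Cls false φ` is the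
set `Cls⁻(φ)` of violation classes; a class is represented by its instantiation map
`Θ → STL N` sending a valuation `θ` to the STL formula `ψ(θ)`. -/
def Cls {N : ℕ} : Bool → (φ : AForm N) → Set (Val φ → STL N)
  | b, .atom f =>
      {fun _ => if b then STL.falsum else STL.top, fun _ => STL.atom f}
  | _, .falsum => {fun _ => STL.falsum}
  | b, .not φ =>
      {c | ∃ ψ ∈ Cls (!b) φ, c = fun θ => STL.not (ψ θ)}
  | b, .and φ₁ φ₂ =>
      {c | ∃ ψ₁ ∈ Cls b φ₁, ∃ ψ₂ ∈ Cls b φ₂,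
        c = fun θ => STL.and (ψ₁ θ.1) (ψ₂ θ.2)}
  | b, .or φ₁ φ₂ =>
      {c | ∃ ψ₁ ∈ Cls b φ₁, ∃ ψ₂ ∈ Cls b φ₂,
        c = fun θ => STL.or (ψ₁ θ.1) (ψ₂ θ.2)}
  | b, .always _ _ k φ =>
      {c | ∃ ψ : Fin (k + 1) → Val φ → STL N, (∀ i, ψ i ∈ Cls b φ) ∧
        c = fun θ => iAnd fun i : Fin (k + 1) =>
          STL.always (θ.1.pts i.castSucc) (θ.1.pts i.succ) (ψ i θ.2)}
  | b, .event _ _ k φ =>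
      {c | ∃ ψ : Fin (k + 1) → Val φ → STL N, (∀ i, ψ i ∈ Cls b φ) ∧
        c = fun θ => iOr fun i : Fin (k + 1) =>
          STL.event (θ.1.pts i.castSucc) (θ.1.pts i.succ) (ψ i θ.2)}
  | b, .untl _ _ k φ₁ φ₂ =>
      {c | ∃ ψ : Fin (k + 1) → Val φ₁ → STL N, ∃ σ : Fin (k + 1) → Val φ₂ → STL N,
           ∃ ξ : Fin (k + 1) → Fin (k + 1) → Val φ₁ → STL N,
        (∀ i, ψ i ∈ Cls b φ₁) ∧ (∀ i, σ i ∈ Cls b φ₂) ∧ (∀ i j, ξ i j ∈ Cls b φ₁) ∧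
        c = fun θ => iOr fun i : Fin (k + 1) =>
          STL.and
            (STL.untl (θ.1.pts i.castSucc) (θ.1.pts i.succ) (ψ i θ.2.1) (σ i θ.2.2))
            (iAnd fun j : Fin (i : ℕ) =>
              STL.always (θ.1.pts (j.castLE i.isLt.le).castSucc)
                (θ.1.pts (j.castLE i.isLt.le).succ) (ξ i (j.castLE i.isLt.le) θ.2.1))}

/-- The satisfiable set `S(ψ)` of a class. -/
def SatSet {N : ℕ} (φ : AForm N) (ψ : Val φ → STL N) : Set (Signal N) :=
  {w | ∃ θ : Val φ, Sat w (ψ θ)}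

/-- The falsifiable set `V(ψ)` of a class. -/
def VioSet {N : ℕ} (φ : AForm N) (ψ : Val φ → STL N) : Set (Signal N) :=
  {w | ∃ θ : Val φ, Vio w (ψ θ)}


/-! ### Auxiliary lemmas -/

lemma le_robust_listAnd {N : ℕ} {x : EReal} {w : Signal N} :
    ∀ (l : List (STL N)), (∀ φ ∈ l, x ≤ robust φ w) → x ≤ robust (listAnd l) w
  | [] => fun _ => by simp [listAnd, STL.top, robust]
  | [φ] => fun h => h φ (by simp)
  | φ :: φ' :: rest => fun h => by
      simp only [listAnd, robust]
      exact le_min (h φ (by simp))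
        (le_robust_listAnd (φ' :: rest) fun ψ hm => h ψ (by simp [List.mem_cons] at hm ⊢; tauto))

lemma robust_listAnd_le {N : ℕ} {w : Signal N} :
    ∀ (l : List (STL N)), ∀ φ ∈ l, robust (listAnd l) w ≤ robust φ w
  | [] => fun φ h => by simp at h
  | [ψ] => fun φ h => by simp at h; subst h; exact le_rfl
  | ψ :: ψ' :: rest => fun φ h => by
      simp only [listAnd, robust]
      rcases List.mem_cons.1 h with rfl | h
      · exact min_le_left _ _
      · exact (min_le_right _ _).trans (robust_listAnd_le (ψ' :: rest) φ h)

lemma robust_listOr_le {N : ℕ} {x : EReal} {w : Signal N} :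
    ∀ (l : List (STL N)), (∀ φ ∈ l, robust φ w ≤ x) → robust (listOr l) w ≤ x
  | [] => fun _ => by simp [listOr, robust]
  | [φ] => fun h => h φ (by simp)
  | φ :: φ' :: rest => fun h => by
      simp only [listOr, robust]
      exact max_le (h φ (by simp))
        (robust_listOr_le (φ' :: rest) fun ψ hm => h ψ (by simp [List.mem_cons] at hm ⊢; tauto))

lemma le_robust_listOr {N : ℕ} {w : Signal N} :
    ∀ (l : List (STL N)), ∀ φ ∈ l, robust φ w ≤ robust (listOr l) w
  | [] => fun φ h => by simp at h
  | [ψ] => fun φ h => by simp at h; subst h; exact le_rfl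
  | ψ :: ψ' :: rest => fun φ h => by
      simp only [listOr, robust]
      rcases List.mem_cons.1 h with rfl | h
      · exact le_max_left _ _
      · exact (le_robust_listOr (ψ' :: rest) φ h).trans (le_max_right _ _)

lemma le_robust_iAnd {N k : ℕ} {x : EReal} {w : Signal N} {f : Fin k → STL N}
    (h : ∀ i, x ≤ robust (f i) w) : x ≤ robust (iAnd f) w :=
  le_robust_listAnd _ fun φ hφ => by
    obtain ⟨i, rfl⟩ := List.mem_ofFn.1 hφ; exact h i

lemma robust_iAnd_le {N k : ℕ} {w : Signal N} {f : Fin k → STL N} (i : Fin k) :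
    robust (iAnd f) w ≤ robust (f i) w :=
  robust_listAnd_le _ (f i) (List.mem_ofFn.2 ⟨i, rfl⟩)

lemma robust_iOr_le {N k : ℕ} {x : EReal} {w : Signal N} {f : Fin k → STL N}
    (h : ∀ i, robust (f i) w ≤ x) : robust (iOr f) w ≤ x :=
  robust_listOr_le _ fun φ hφ => by
    obtain ⟨i, rfl⟩ := List.mem_ofFn.1 hφ; exact h i

lemma le_robust_iOr {N k : ℕ} {w : Signal N} {f : Fin k → STL N} (i : Fin k) :
    robust (f i) w ≤ robust (iOr f) w :=
  le_robust_listOr _ (f i) (List.mem_ofFn.2 ⟨i, rfl⟩)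

/-- Every `t` in `[pts 0, pts (last)]` lies in some segment, and one can choose the
first such segment, so that all earlier segments lie strictly below `t`. -/
lemma exists_segment {m : ℕ} (pts : Fin (m + 2) → ℝ) (mono : Monotone pts) {t : ℝ}
    (h0 : pts 0 ≤ t) (hl : t ≤ pts (Fin.last (m + 1))) :
    ∃ i : Fin (m + 1), pts i.castSucc ≤ t ∧ t ≤ pts i.succ ∧
      ∀ j : Fin (m + 1), j < i → pts j.succ < t := by
  classical
  set S : Finset (Fin (m + 1)) := Finset.univ.filter (fun i => t ≤ pts i.succ) with hS
  have hmem : ∀ i : Fin (m + 1), i ∈ S ↔ t ≤ pts i.succ := by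
    intro i; simp [hS]
  have hne : S.Nonempty := ⟨Fin.last m, (hmem _).2 (by rw [Fin.succ_last]; exact hl)⟩
  set i := S.min' hne with hi
  have hiS : i ∈ S := S.min'_mem hne
  have hout : ∀ j : Fin (m + 1), j < i → pts j.succ < t := by
    intro j hj
    by_contra hc
    exact absurd (S.min'_le j ((hmem j).2 (le_of_not_gt hc))) (not_le.2 hj)
  refine ⟨i, ?_, (hmem i).1 hiS, hout⟩
  rcases Nat.eq_zero_or_pos i.val with h0' | hpos
  · have : i.castSucc = (0 : Fin (m + 2)) := by
      apply Fin.ext; simpa using h0'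
    rw [this]; exact h0
  · set j : Fin (m + 1) := ⟨i.val - 1, by omega⟩ with hj
    have hji : j < i := by
      rw [Fin.lt_def]; show i.val - 1 < i.val; omega
    have hjs : j.succ = i.castSucc := by
      apply Fin.ext; simp [hj, Fin.val_succ]; omega
    rw [← hjs]
    exact (hout j hji).le

lemma split_mono {a b : ℝ} {n : ℕ} (s : Split a b n) : Monotone s.pts :=
  s.strictMono.monotone

lemma split_left_le {a b : ℝ} {n : ℕ} (s : Split a b n) (i : Fin (n + 1)) :
    a ≤ s.pts i := by
  have := split_mono s (Fin.zero_le i); rwa [s.first] at this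

lemma split_le_right {a b : ℝ} {n : ℕ} (s : Split a b n) (i : Fin (n + 1)) :
    s.pts i ≤ b := by
  have := split_mono s (Fin.le_last i); rwa [s.last] at this

/-- Main quantitative lemma, both directions simultaneously by induction. -/
lemma cls_quantitative {N : ℕ} :
    ∀ (φ : AForm N) (s : Bool) (ψ : Val φ → STL N), φ.WF → ψ ∈ Cls s φ →
      ∀ (θ : Val φ) (w : Signal N),
        (s = true → robust (ψ θ) w ≤ robust φ.toSTL w) ∧
        (s = false → robust φ.toSTL w ≤ robust (ψ θ) w) := by
  intro φ
  induction φ with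
  | atom f =>
    intro s ψ _ hψ θ w
    rcases hψ with rfl | hψ
    · cases s
      · refine ⟨fun h => by simp at h, fun _ => ?_⟩
        simp only [robust, STL.top, AForm.toSTL, Bool.false_eq_true, ↓reduceIte]
        rw [EReal.neg_bot]; exact le_top
      · exact ⟨fun _ => by simp only [robust]; exact bot_le, fun h => by simp at h⟩
    · rw [Set.mem_singleton_iff] at hψ; subst hψ
      exact ⟨fun _ => le_rfl, fun _ => le_rfl⟩
  | falsum =>
    intro s ψ _ hψ θ w
    simp only [Cls, Set.mem_singleton_iff] at hψ; subst hψ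
    exact ⟨fun _ => le_rfl, fun _ => le_rfl⟩
  | not φ ih =>
    intro s ψ hφ hψ θ w
    obtain ⟨ψ', hψ', rfl⟩ := hψ
    have := ih (!s) ψ' hφ hψ' θ w
    cases s
    · refine ⟨fun h => by simp at h, fun _ => ?_⟩
      simp only [robust, AForm.toSTL]
      exact EReal.neg_le_neg_iff.2 (this.1 rfl)
    · refine ⟨fun _ => ?_, fun h => by simp at h⟩
      simp only [robust, AForm.toSTL]
      exact EReal.neg_le_neg_iff.2 (this.2 rfl)
  | and φ₁ φ₂ ih₁ ih₂ =>
    intro s ψ hφ hψ θ w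
    obtain ⟨ψ₁, h₁, ψ₂, h₂, rfl⟩ := hψ
    have H₁ := ih₁ s ψ₁ hφ.1 h₁ θ.1 w
    have H₂ := ih₂ s ψ₂ hφ.2 h₂ θ.2 w
    simp only [robust, AForm.toSTL]
    exact ⟨fun h => min_le_min (H₁.1 h) (H₂.1 h), fun h => min_le_min (H₁.2 h) (H₂.2 h)⟩
  | or φ₁ φ₂ ih₁ ih₂ =>
    intro s ψ hφ hψ θ w
    obtain ⟨ψ₁, h₁, ψ₂, h₂, rfl⟩ := hψ
    have H₁ := ih₁ s ψ₁ hφ.1 h₁ θ.1 w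
    have H₂ := ih₂ s ψ₂ hφ.2 h₂ θ.2 w
    simp only [robust, AForm.toSTL]
    exact ⟨fun h => max_le_max (H₁.1 h) (H₂.1 h), fun h => max_le_max (H₁.2 h) (H₂.2 h)⟩
  | always a b k φ ih =>
    intro s ψ hφ hψ θ w
    obtain ⟨ψf, hψf, rfl⟩ := hψ
    obtain ⟨ha, hab, hwf⟩ := hφ
    constructor
    · rintro rfl
      simp only [AForm.toSTL, robust]
      refine le_iInf fun t => ?_
      obtain ⟨i, hle, hge, -⟩ := exists_segment (t := t.1) θ.1.pts (split_mono θ.1)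
        (by rw [θ.1.first]; exact t.2.1) (by rw [θ.1.last]; exact t.2.2)
      refine (robust_iAnd_le i).trans ?_
      simp only [robust]
      refine (iInf_le _ (⟨t.1, hle, hge⟩ : Set.Icc _ _)).trans ?_
      exact (ih true (ψf i) hwf (hψf i) θ.2 (shift w t.1)).1 rfl
    · rintro rfl
      simp only [AForm.toSTL, robust]
      refine le_robust_iAnd fun i => ?_
      simp only [robust]
      refine le_iInf fun t => ?_
      have ht : t.1 ∈ Set.Icc a b :=
        ⟨(split_left_le θ.1 _).trans t.2.1, t.2.2.trans (split_le_right θ.1 _)⟩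
      exact (iInf_le _ (⟨t.1, ht⟩ : Set.Icc a b)).trans
        ((ih false (ψf i) hwf (hψf i) θ.2 (shift w t.1)).2 rfl)
  | event a b k φ ih =>
    intro s ψ hφ hψ θ w
    obtain ⟨ψf, hψf, rfl⟩ := hψ
    obtain ⟨ha, hab, hwf⟩ := hφ
    constructor
    · rintro rfl
      simp only [AForm.toSTL, robust]
      refine robust_iOr_le fun i => ?_
      simp only [robust]
      refine iSup_le fun t => ?_
      have ht : t.1 ∈ Set.Icc a b :=
        ⟨(split_left_le θ.1 _).trans t.2.1, t.2.2.trans (split_le_right θ.1 _)⟩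
      exact ((ih true (ψf i) hwf (hψf i) θ.2 (shift w t.1)).1 rfl).trans
        (le_iSup_of_le (⟨t.1, ht⟩ : Set.Icc a b) le_rfl)
    · rintro rfl
      simp only [AForm.toSTL, robust]
      refine iSup_le fun t => ?_
      obtain ⟨i, hle, hge, -⟩ := exists_segment (t := t.1) θ.1.pts (split_mono θ.1)
        (by rw [θ.1.first]; exact t.2.1) (by rw [θ.1.last]; exact t.2.2)
      refine le_trans ?_ (le_robust_iOr i)
      simp only [robust]
      exact ((ih false (ψf i) hwf (hψf i) θ.2 (shift w t.1)).2 rfl).trans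
        (le_iSup_of_le (⟨t.1, hle, hge⟩ : Set.Icc _ _) le_rfl)
  | untl a b k φ₁ φ₂ ih₁ ih₂ =>
    intro s ψ hφ hψ θ w
    obtain ⟨ψf, σf, ξf, hψf, hσf, hξf, rfl⟩ := hψ
    obtain ⟨ha, hab, hwf₁, hwf₂⟩ := hφ
    constructor
    · rintro rfl
      simp only [AForm.toSTL, robust]
      refine robust_iOr_le fun i => ?_
      simp only [robust]
      refine (min_le_left _ _).trans (iSup_le fun t => ?_)
      have ht : t.1 ∈ Set.Icc a b :=
        ⟨(split_left_le θ.1 _).trans t.2.1, t.2.2.trans (split_le_right θ.1 _)⟩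
      refine le_iSup_of_le (⟨t.1, ht⟩ : Set.Icc a b) (min_le_min ?_ ?_)
      · exact (ih₂ true (σf i) hwf₂ (hσf i) θ.2.2 (shift w t.1)).1 rfl
      · exact le_iInf fun t' => (iInf_le _ t').trans
          ((ih₁ true (ψf i) hwf₁ (hψf i) θ.2.1 (shift w t'.1)).1 rfl)
    · rintro rfl
      simp only [AForm.toSTL, robust]
      refine iSup_le fun t => ?_
      obtain ⟨i, hle, hge, hprev⟩ := exists_segment (t := t.1) θ.1.pts (split_mono θ.1)
        (by rw [θ.1.first]; exact t.2.1) (by rw [θ.1.last]; exact t.2.2)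
      refine le_trans ?_ (le_robust_iOr i)
      simp only [robust]
      refine le_min ?_ ?_
      · refine le_iSup_of_le (⟨t.1, hle, hge⟩ : Set.Icc _ _) (min_le_min ?_ ?_)
        · exact (ih₂ false (σf i) hwf₂ (hσf i) θ.2.2 (shift w t.1)).2 rfl
        · exact le_iInf fun t' => (iInf_le _ t').trans
            ((ih₁ false (ψf i) hwf₁ (hψf i) θ.2.1 (shift w t'.1)).2 rfl)
      · refine le_robust_iAnd fun j => ?_
        simp only [robust]
        refine le_iInf fun t' => ?_
        have hj : (j.castLE i.isLt.le) < i := by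
          rw [Fin.lt_def]; simpa using j.isLt
        have ht' : t'.1 ∈ Set.Ico (0 : ℝ) t.1 := by
          constructor
          · exact le_trans (ha.trans (split_left_le θ.1 _)) t'.2.1
          · exact lt_of_le_of_lt t'.2.2 (hprev _ hj)
        exact (min_le_right _ _).trans ((iInf_le _ (⟨t'.1, ht'⟩ : Set.Ico (0:ℝ) t.1)).trans
          ((ih₁ false (ξf i (j.castLE i.isLt.le)) hwf₁ (hξf i _) θ.2.1 (shift w t'.1)).2 rfl))

/-- Quantitative soundness of violation classes: for every `ψ ∈ Cls⁻(φ)`, every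
valuation `θ ∈ Θ` and every signal `w`, `ρ(w, φ) ≤ ρ(w, ψ(θ))`. -/
theorem vio_class_quantitative {N : ℕ} (φ : AForm N) (hφ : φ.WF)
    (ψ : Val φ → STL N) (hψ : ψ ∈ Cls false φ) (θ : Val φ) (w : Signal N) :
    robust φ.toSTL w ≤ robust (ψ θ) w :=
  (cls_quantitative φ false ψ hφ hψ θ w).2 rfl

end STLClass
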